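/- Let r > 0, w > 0, γ > 0, u, v ∈ ℝ^n with ‖u‖₂ = r and v ≠ 0, and set a = γ(w/r³)uᵀv + w/r, b = −(3γw/r⁵ uᵀv + w/r³), c = γw/r³. Then the product of the two extreme eigenvalues of aI + buuᵀ + c(uvᵀ+vuᵀ) satisfies λ₁λ₃ = (γ²w²/r⁶)‖u‖₂²‖v‖₂²(ρ² − 1) ≤ 0, where ρ = uᵀv/(‖u‖₂‖v‖₂); hence λ₁λ₃ < 0 (the matrix is indefinite on span{u,v}) unless ρ = ±1. -/

import Mathlib

open BigOperators

/-- Euclidean norm of a vector in `ℝ^n`. -/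
noncomputable def enorm {n : ℕ} (v : Fin n → ℝ) : ℝ := Real.sqrt (∑ i, v i ^ 2)

/-- Euclidean dot product. -/
def dot {n : ℕ} (u v : Fin n → ℝ) : ℝ := ∑ i, u i * v i

/-- Discriminant of the rank-two perturbation `aI + buuᵀ + c(uvᵀ + vuᵀ)` with `‖u‖ = r`. -/
noncomputable def Delta {n : ℕ} (b c r : ℝ) (u v : Fin n → ℝ) : ℝ :=
  4 * c ^ 2 * r ^ 2 * (_root_.enorm v) ^ 2 + b ^ 2 * r ^ 4 + 4 * b * c * r ^ 2 * dot u v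

/-- Extreme eigenvalue `λ₁`. -/
noncomputable def lam1 {n : ℕ} (a b c r : ℝ) (u v : Fin n → ℝ) : ℝ :=
  (2 * a + b * r ^ 2 + 2 * c * dot u v) / 2 + Real.sqrt (Delta b c r u v) / 2

/-- Extreme eigenvalue `λ₃`. -/
noncomputable def lam3 {n : ℕ} (a b c r : ℝ) (u v : Fin n → ℝ) : ℝ :=
  (2 * a + b * r ^ 2 + 2 * c * dot u v) / 2 - Real.sqrt (Delta b c r u v) / 2

set_option maxHeartbeats 1000000 in
/-- Product of the two extreme eigenvalues of the rank-two perturbation: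
`λ₁λ₃ = (γ²w²/r⁶)‖u‖²‖v‖²(ρ² − 1) ≤ 0` with `ρ = uᵀv/(‖u‖‖v‖)`, and `λ₁λ₃ < 0`
(the matrix is indefinite on `span{u,v}`) unless `ρ = ±1`. -/
theorem stmt8 {n : ℕ} (r w γ : ℝ) (hr : 0 < r) (hw : 0 < w) (hγ : 0 < γ)
    (u v : Fin n → ℝ) (hu : _root_.enorm u = r) (hv : v ≠ 0)
    (a b c ρ : ℝ)
    (hA : a = γ * (w / r ^ 3) * dot u v + w / r)
    (hB : b = -(3 * γ * w / r ^ 5 * dot u v + w / r ^ 3))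
    (hC : c = γ * w / r ^ 3)
    (hρ : ρ = dot u v / (_root_.enorm u * _root_.enorm v)) :
    lam1 a b c r u v * lam3 a b c r u v =
      γ ^ 2 * w ^ 2 / r ^ 6 * (_root_.enorm u) ^ 2 * (_root_.enorm v) ^ 2 * (ρ ^ 2 - 1) ∧
    lam1 a b c r u v * lam3 a b c r u v ≤ 0 ∧
    (ρ ≠ 1 → ρ ≠ -1 → lam1 a b c r u v * lam3 a b c r u v < 0) := by
  have hrne : r ≠ 0 := ne_of_gt hr
  set d := dot u v with hd
  have hUsq : (_root_.enorm u) ^ 2 = ∑ i, u i ^ 2 :=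
    Real.sq_sqrt (Finset.sum_nonneg fun i _ => sq_nonneg _)
  have hVsq : (_root_.enorm v) ^ 2 = ∑ i, v i ^ 2 :=
    Real.sq_sqrt (Finset.sum_nonneg fun i _ => sq_nonneg _)
  have hCS : d ^ 2 ≤ (_root_.enorm u) ^ 2 * (_root_.enorm v) ^ 2 := by
    rw [hUsq, hVsq]
    exact Finset.sum_mul_sq_le_sq_mul_sq Finset.univ u v
  have hVpos : 0 < _root_.enorm v := by
    have : ∃ i, v i ≠ 0 := by
      by_contra h
      push_neg at h
      exact hv (funext h)
    obtain ⟨i, hi⟩ := this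
    have hsum : 0 < ∑ i, v i ^ 2 :=
      Finset.sum_pos' (fun j _ => sq_nonneg _) ⟨i, Finset.mem_univ i, by positivity⟩
    exact Real.sqrt_pos.mpr hsum
  set V := _root_.enorm v with hV
  have hd2 : d ^ 2 ≤ r ^ 2 * V ^ 2 := by rw [← hu]; exact hCS
  have hΔeq : Delta b c r u v = (c * d + w / r) ^ 2 - 4 * c ^ 2 * (d ^ 2 - r ^ 2 * V ^ 2) := by
    simp only [Delta, hB, hC, ← hd, ← hV]
    field_simp
    ring
  have hΔ0 : 0 ≤ Delta b c r u v := by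
    rw [hΔeq]; nlinarith [sq_nonneg (c * d + w / r), sq_nonneg c]
  have hsq : Real.sqrt (Delta b c r u v) ^ 2 = Delta b c r u v := Real.sq_sqrt hΔ0
  have hprod : lam1 a b c r u v * lam3 a b c r u v =
      γ ^ 2 * w ^ 2 / r ^ 6 * (d ^ 2 - r ^ 2 * V ^ 2) := by
    have h1 : lam1 a b c r u v * lam3 a b c r u v =
        ((2 * a + b * r ^ 2 + 2 * c * d) / 2) ^ 2 - Delta b c r u v / 4 := by
      simp only [lam1, lam3, ← hd]
      nlinarith [hsq]
    rw [h1, hΔeq]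
    have hM : 2 * a + b * r ^ 2 + 2 * c * d = c * d + w / r := by
      rw [hA, hB, hC]; field_simp; ring
    rw [hM, hC]
    field_simp
    ring
  have hρ2 : ρ ^ 2 = d ^ 2 / (r ^ 2 * V ^ 2) := by
    rw [hρ, hu, div_pow, mul_pow]
  have hrV : 0 < r ^ 2 * V ^ 2 := by positivity
  have hkey : r ^ 2 * V ^ 2 * (ρ ^ 2 - 1) = d ^ 2 - r ^ 2 * V ^ 2 := by
    rw [hρ2]; field_simp
  have heq : lam1 a b c r u v * lam3 a b c r u v =
      γ ^ 2 * w ^ 2 / r ^ 6 * (_root_.enorm u) ^ 2 * (_root_.enorm v) ^ 2 * (ρ ^ 2 - 1) := by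
    rw [hprod, hu, ← hV, ← hkey]; ring
  refine ⟨heq, ?_, ?_⟩
  · rw [hprod]
    have : d ^ 2 - r ^ 2 * V ^ 2 ≤ 0 := by linarith
    have hpos : 0 < γ ^ 2 * w ^ 2 / r ^ 6 := by positivity
    nlinarith
  · intro h1 h2
    rw [heq]
    have hρlt : ρ ^ 2 < 1 := by
      have hle : ρ ^ 2 ≤ 1 := by
        rw [hρ2]
        rw [div_le_one hrV]; linarith
      rcases lt_or_eq_of_le hle with h | h
      · exact h
      · exfalso
        have hfac : (ρ - 1) * (ρ + 1) = 0 := by nlinarith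
        rcases mul_eq_zero.mp hfac with h' | h'
        · exact h1 (by linarith)
        · exact h2 (by linarith)
    have : 0 < γ ^ 2 * w ^ 2 / r ^ 6 * (_root_.enorm u) ^ 2 * (_root_.enorm v) ^ 2 := by
      rw [hu, ← hV]; positivity
    nlinarith
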